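/- Let μ be a modulus of continuity, let m ≥ 1, T > 0, L > 0, δ > 0, R > 0, and let a_0, …, a_{m−1} : [0, T] → ℝ satisfy |a_j(t) − a_j(s)| ≤ L μ(|t−s|) for all t, s ∈ [0, T] with |t−s| ≤ 1. Suppose that for every t ∈ [0, T] the monic polynomial X^m − Σ_{j=0}^{m−1} a_j(t) X^j has m real roots τ_1(t) < τ_2(t) < ⋯ < τ_m(t) with τ_{k+1}(t) − τ_k(t) ≥ δ for all k, and |τ_k(t)| ≤ R for all k, t. Then there exists a constant C > 0, depending only on m, δ, R and L, such that |τ_k(t) − τ_k(s)| ≤ C μ(|t−s|) for all k = 1, …, m and all t, s ∈ [0, T] with |t−s| ≤ 1. -/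

import Mathlib

noncomputable section

open Real Set Filter MeasureTheory

/-- Japanese bracket `⟨ξ⟩ = (1 + |ξ|²)^(1/2)`. -/
def jb {n : ℕ} (ξ : EuclideanSpace ℝ (Fin n)) : ℝ := Real.sqrt (1 + ‖ξ‖ ^ 2)

/-- Partial derivative in the `i`-th coordinate direction. -/
def pd {n : ℕ} (i : Fin n) (f : EuclideanSpace ℝ (Fin n) → ℝ) :
    EuclideanSpace ℝ (Fin n) → ℝ :=
  fun x => fderiv ℝ f x (EuclideanSpace.single i 1)

/-- Iterated partial derivative `∂^α` for a multi-index `α : Fin n → ℕ`. -/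
def md {n : ℕ} (α : Fin n → ℕ) (f : EuclideanSpace ℝ (Fin n) → ℝ) :
    EuclideanSpace ℝ (Fin n) → ℝ :=
  (List.finRange n).foldr (fun i g => (pd i)^[α i] g) f

open Polynomial in
/-- A monic polynomial with `m` distinct real roots factors completely. -/
lemma myfact17 (m : ℕ) (c r : Fin m → ℝ)
    (hr : ∀ k, (r k) ^ m - ∑ j : Fin m, c j * (r k) ^ (j : ℕ) = 0)
    (hinj : Function.Injective r) (x : ℝ) :
    x ^ m - ∑ j : Fin m, c j * x ^ (j : ℕ) = ∏ l : Fin m, (x - r l) := by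
  classical
  set P : ℝ[X] := X ^ m - ∑ j : Fin m, C (c j) * X ^ (j : ℕ) with hP
  set Q : ℝ[X] := ∏ l : Fin m, (X - C (r l)) with hQ
  have hev : ∀ y : ℝ, P.eval y = y ^ m - ∑ j : Fin m, c j * y ^ (j : ℕ) := by
    intro y; simp [hP, eval_finset_sum]
  have hevQ : ∀ y : ℝ, Q.eval y = ∏ l : Fin m, (y - r l) := by
    intro y; simp [hQ, eval_prod]
  have hsumdeg : (∑ j : Fin m, C (c j) * X ^ (j : ℕ) : ℝ[X]).degree < (m : ℕ) := by
    apply lt_of_le_of_lt (Polynomial.degree_sum_le _ _)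
    apply Finset.sup_lt_iff (by exact_mod_cast WithBot.bot_lt_coe m) |>.2
    intro j _
    calc (C (c j) * X ^ (j:ℕ)).degree ≤ ((j:ℕ) : WithBot ℕ) :=
          Polynomial.degree_C_mul_X_pow_le (j:ℕ) (c j)
      _ < ((m : ℕ) : WithBot ℕ) := by exact_mod_cast j.isLt
  have hPm : P.Monic := by
    exact Polynomial.monic_X_pow_sub hsumdeg
  have hQm : Q.Monic := monic_prod_of_monic _ _ fun l _ => monic_X_sub_C _
  have hPdeg : P.degree = m := by
    rw [hP, sub_eq_add_neg]
    rw [Polynomial.degree_add_eq_left_of_degree_lt]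
    · simp
    · simpa using hsumdeg
  have hQdeg : Q.degree = m := by
    rw [hQ]
    rw [Polynomial.degree_prod]
    simp [Polynomial.degree_X_sub_C]
  have hD : P - Q = 0 := by
    rcases eq_or_ne P Q with h | h
    · simp [h]
    apply Polynomial.eq_zero_of_natDegree_lt_card_of_eval_eq_zero (P - Q) hinj
    · intro k
      have h1 : P.eval (r k) = 0 := by rw [hev]; exact hr k
      have h2 : Q.eval (r k) = 0 := by
        rw [hevQ]; exact Finset.prod_eq_zero (Finset.mem_univ k) (by ring)
      simp [h1, h2]
    · have hlt : (P - Q).degree < m := by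
        rw [← hPdeg]
        exact Polynomial.degree_sub_lt (hPdeg.trans hQdeg.symm) hPm.ne_zero
          (by rw [hPm.leadingCoeff, hQm.leadingCoeff])
      have : (P - Q).natDegree < m := by
        rcases eq_or_ne (P - Q) 0 with h0 | h0
        · exact absurd (sub_eq_zero.mp h0) h
        · exact_mod_cast (Polynomial.degree_eq_natDegree h0) ▸ hlt
      simpa using this
  have hPQ : P = Q := sub_eq_zero.mp hD
  calc x ^ m - ∑ j : Fin m, c j * x ^ (j : ℕ) = P.eval x := (hev x).symm
    _ = Q.eval x := by rw [hPQ]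
    _ = ∏ l : Fin m, (x - r l) := hevQ x

lemma fin_strictMono_id {m : ℕ} {f : Fin m → Fin m} (hf : StrictMono f) (k : Fin m) :
    f k = k := by
  have hsurj : Function.Surjective f :=
    Finite.injective_iff_surjective.mp hf.injective
  have : f = id := (hf.range_inj strictMono_id).1 (by
    rw [Set.range_id]
    exact Set.range_eq_univ.2 hsurj)
  simp [this]

/-- μ-continuity of the simple, well-separated, bounded real roots of a monic polynomial
whose coefficients are μ-continuous in time. -/
theorem stmt17 (μ : ℝ → ℝ)
    (hμcont : ContinuousOn μ (Set.Icc 0 1))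
    (hμconc : ConcaveOn ℝ (Set.Icc 0 1) μ)
    (hμmono : MonotoneOn μ (Set.Icc 0 1))
    (hμ0 : μ 0 = 0)
    (hμmap : ∀ s ∈ Set.Icc (0:ℝ) 1, μ s ∈ Set.Icc (0:ℝ) 1)
    (m : ℕ) (hm : 1 ≤ m) (T L δ R : ℝ) (hT : 0 < T) (hL : 0 < L)
    (hδ : 0 < δ) (hR : 0 < R)
    (a : Fin m → ℝ → ℝ)
    (ha : ∀ j : Fin m, ∀ t ∈ Set.Icc (0:ℝ) T, ∀ s ∈ Set.Icc (0:ℝ) T, |t - s| ≤ 1 →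
      |a j t - a j s| ≤ L * μ |t - s|)
    (τ : Fin m → ℝ → ℝ)
    (hroot : ∀ t ∈ Set.Icc (0:ℝ) T, ∀ k : Fin m,
      (τ k t) ^ m - ∑ j : Fin m, a j t * (τ k t) ^ (j : ℕ) = 0)
    (horder : ∀ t ∈ Set.Icc (0:ℝ) T, ∀ k l : Fin m, k < l → τ k t < τ l t)
    (hsep : ∀ t ∈ Set.Icc (0:ℝ) T, ∀ k : Fin m, ∀ hk : (k : ℕ) + 1 < m,
      δ ≤ τ ⟨(k : ℕ) + 1, hk⟩ t - τ k t)
    (hbd : ∀ t ∈ Set.Icc (0:ℝ) T, ∀ k : Fin m, |τ k t| ≤ R) :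
    ∃ C > 0, ∀ k : Fin m, ∀ t ∈ Set.Icc (0:ℝ) T, ∀ s ∈ Set.Icc (0:ℝ) T,
      |t - s| ≤ 1 → |τ k t - τ k s| ≤ C * μ |t - s| := by
  classical
  -- separation for arbitrary pairs
  have hsep' : ∀ t ∈ Set.Icc (0:ℝ) T, ∀ k l : Fin m, k < l → δ ≤ τ l t - τ k t := by
    intro t ht k l hkl
    have hk1 : (k : ℕ) + 1 ≤ (l : ℕ) := hkl
    have hk1m : (k : ℕ) + 1 < m := lt_of_le_of_lt hk1 l.isLt
    have h1 : δ ≤ τ ⟨(k : ℕ) + 1, hk1m⟩ t - τ k t := hsep t ht k hk1m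
    have h2 : τ (⟨(k : ℕ) + 1, hk1m⟩ : Fin m) t ≤ τ l t := by
      rcases eq_or_lt_of_le hk1 with h | h
      · have : (⟨(k : ℕ) + 1, hk1m⟩ : Fin m) = l := Fin.ext h
        rw [this]
      · exact le_of_lt (horder t ht _ _ h)
    linarith
  set R1 : ℝ := max R 1 with hR1
  have hR1one : (1:ℝ) ≤ R1 := le_max_right _ _
  set M : ℝ := (m : ℝ) * L * R1 ^ m with hM
  have hMpos : 0 < M := by
    apply mul_pos (mul_pos _ hL) (pow_pos (lt_of_lt_of_le one_pos hR1one) m)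
    exact_mod_cast Nat.lt_of_lt_of_le Nat.zero_lt_one hm
  have hδ3 : 0 < δ / 3 := by linarith
  set ε : ℝ := (δ / 3) ^ m / M with hε
  have hεpos : 0 < ε := div_pos (pow_pos hδ3 m) hMpos
  set C : ℝ := max (M / (δ / 3) ^ (m - 1)) (2 * R / ε) with hC
  have hCpos : 0 < C :=
    lt_max_of_lt_left (div_pos hMpos (pow_pos hδ3 _))
  refine ⟨C, hCpos, ?_⟩
  intro k t ht s hs hts
  set h : ℝ := |t - s| with hh
  have hμmem : μ h ∈ Set.Icc (0:ℝ) 1 := hμmap h ⟨abs_nonneg _, hts⟩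
  have hμnn : 0 ≤ μ h := hμmem.1
  -- the key product estimate
  have hprod : |∏ l : Fin m, (τ k t - τ l s)| ≤ M * μ h := by
    have hinj : Function.Injective (fun l => τ l s) := by
      intro x y hxy
      by_contra hne
      rcases lt_or_gt_of_ne hne with h' | h'
      · exact absurd hxy (ne_of_lt (horder s hs _ _ h'))
      · exact absurd hxy.symm (ne_of_lt (horder s hs _ _ h'))
    have hfac := myfact17 m (fun j => a j s) (fun l => τ l s)
      (fun l => hroot s hs l) hinj (τ k t)
    have hzero := hroot t ht k
    have key : ∏ l : Fin m, (τ k t - τ l s)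
        = ∑ j : Fin m, (a j t - a j s) * (τ k t) ^ (j : ℕ) := by
      rw [← hfac]
      have : (τ k t) ^ m = ∑ j : Fin m, a j t * (τ k t) ^ (j : ℕ) := by linarith
      rw [this]
      rw [← Finset.sum_sub_distrib]
      congr 1; ext j; ring
    rw [key]
    calc |∑ j : Fin m, (a j t - a j s) * (τ k t) ^ (j : ℕ)|
        ≤ ∑ j : Fin m, |(a j t - a j s) * (τ k t) ^ (j : ℕ)| :=
          Finset.abs_sum_le_sum_abs _ _
      _ ≤ ∑ j : Fin m, L * μ h * R1 ^ m := by
          apply Finset.sum_le_sum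
          intro j _
          rw [abs_mul]
          apply mul_le_mul (ha j t ht s hs hts)
          · rw [abs_pow]
            calc |τ k t| ^ (j:ℕ) ≤ R1 ^ (j:ℕ) := by
                  apply pow_le_pow_left₀ (abs_nonneg _)
                  exact le_trans (hbd t ht k) (le_max_left _ _)
              _ ≤ R1 ^ m := pow_le_pow_right₀ hR1one
                  (le_of_lt j.isLt)
          · positivity
          · positivity
      _ = M * μ h := by
          rw [Finset.sum_const, Finset.card_univ, Fintype.card_fin]
          simp [hM]; ring
  by_cases hcase : μ h ≤ ε
  · -- small case: identify nearest roots
    have hprod' : |∏ l : Fin m, (τ k t - τ l s)| ≤ (δ / 3) ^ m := by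
      calc |∏ l : Fin m, (τ k t - τ l s)| ≤ M * μ h := hprod
        _ ≤ M * ε := by nlinarith
        _ = (δ / 3) ^ m := by rw [hε]; field_simp
    -- step 1: every root of P_t is δ/3-close to some root of P_s
    have step1 : ∀ k' : Fin m, ∃ l : Fin m, |τ k' t - τ l s| ≤ δ / 3 := by
      intro k'
      by_contra hcon
      push_neg at hcon
      have hprod'' : |∏ l : Fin m, (τ k' t - τ l s)| ≤ (δ / 3) ^ m := by
        have hprodk' : |∏ l : Fin m, (τ k' t - τ l s)| ≤ M * μ h := by
          have hinj : Function.Injective (fun l => τ l s) := by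
            intro x y hxy
            by_contra hne
            rcases lt_or_gt_of_ne hne with h' | h'
            · exact absurd hxy (ne_of_lt (horder s hs _ _ h'))
            · exact absurd hxy.symm (ne_of_lt (horder s hs _ _ h'))
          have hfac := myfact17 m (fun j => a j s) (fun l => τ l s)
            (fun l => hroot s hs l) hinj (τ k' t)
          have hzero := hroot t ht k'
          have key : ∏ l : Fin m, (τ k' t - τ l s)
              = ∑ j : Fin m, (a j t - a j s) * (τ k' t) ^ (j : ℕ) := by
            rw [← hfac]
            have : (τ k' t) ^ m = ∑ j : Fin m, a j t * (τ k' t) ^ (j : ℕ) := by linarith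
            rw [this, ← Finset.sum_sub_distrib]
            congr 1; ext j; ring
          rw [key]
          calc |∑ j : Fin m, (a j t - a j s) * (τ k' t) ^ (j : ℕ)|
              ≤ ∑ j : Fin m, |(a j t - a j s) * (τ k' t) ^ (j : ℕ)| :=
                Finset.abs_sum_le_sum_abs _ _
            _ ≤ ∑ j : Fin m, L * μ h * R1 ^ m := by
                apply Finset.sum_le_sum
                intro j _
                rw [abs_mul]
                apply mul_le_mul (ha j t ht s hs hts)
                · rw [abs_pow]
                  calc |τ k' t| ^ (j:ℕ) ≤ R1 ^ (j:ℕ) := by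
                        apply pow_le_pow_left₀ (abs_nonneg _)
                        exact le_trans (hbd t ht k') (le_max_left _ _)
                    _ ≤ R1 ^ m := pow_le_pow_right₀ hR1one
                        (le_of_lt j.isLt)
                · positivity
                · positivity
            _ = M * μ h := by
                rw [Finset.sum_const, Finset.card_univ, Fintype.card_fin]
                simp [hM]; ring
        calc |∏ l : Fin m, (τ k' t - τ l s)| ≤ M * μ h := hprodk'
          _ ≤ M * ε := by nlinarith
          _ = (δ / 3) ^ m := by rw [hε]; field_simp
      have hlt : (δ / 3) ^ m < ∏ l : Fin m, |τ k' t - τ l s| := by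
        have : ∏ _l : Fin m, (δ / 3) < ∏ l : Fin m, |τ k' t - τ l s| := by
          apply Finset.prod_lt_prod_of_nonempty
          · intro i _; exact hδ3
          · intro i _; exact hcon i
          · exact Finset.univ_nonempty_iff.2 ⟨⟨0, hm⟩⟩
        simpa [Finset.prod_const, Finset.card_univ, div_pow] using this
      rw [Finset.abs_prod] at hprod''
      exact absurd hprod'' (not_le.2 hlt)
    -- step 2/3: the nearest-root map is strictly monotone, hence the identity
    choose σ hσ using step1
    have hσmono : StrictMono σ := by
      intro k1 k2 h12
      by_contra hcon
      push_neg at hcon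
      have d1 := hσ k1
      have d2 := hσ k2
      rw [abs_le] at d1 d2
      have hd12 : δ ≤ τ k2 t - τ k1 t := hsep' t ht k1 k2 h12
      rcases eq_or_lt_of_le hcon with heq | hlt
      · rw [← heq] at d1
        linarith [d1.1, d1.2, d2.1, d2.2]
      · have : δ ≤ τ (σ k1) s - τ (σ k2) s := hsep' s hs _ _ hlt
        linarith [d1.1, d1.2, d2.1, d2.2]
    have hσid : σ k = k := fin_strictMono_id hσmono k
    have hclose : |τ k t - τ k s| ≤ δ / 3 := by
      have := hσ k; rwa [hσid] at this
    -- lower bound on the other factors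
    have hother : ∀ l : Fin m, l ≠ k → δ / 3 ≤ |τ k t - τ l s| := by
      intro l hl
      have hsepkl : δ ≤ |τ k s - τ l s| := by
        rcases lt_or_gt_of_ne hl with h' | h'
        · rw [abs_of_pos (by linarith [hsep' s hs l k h'])]
          linarith [hsep' s hs l k h']
        · rw [abs_of_neg (by linarith [hsep' s hs k l h'])]
          linarith [hsep' s hs k l h']
      have htri : |τ k s - τ l s| ≤ |τ k t - τ k s| + |τ k t - τ l s| := by
        calc |τ k s - τ l s| = |(τ k s - τ k t) + (τ k t - τ l s)| := by congr 1; ring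
          _ ≤ |τ k s - τ k t| + |τ k t - τ l s| := abs_add_le _ _
          _ = |τ k t - τ k s| + |τ k t - τ l s| := by rw [abs_sub_comm]
      linarith
    have hprodlow : (δ / 3) ^ (m - 1) ≤ ∏ l ∈ Finset.univ.erase k, |τ k t - τ l s| := by
      have hcard : (Finset.univ.erase k).card = m - 1 := by
        rw [Finset.card_erase_of_mem (Finset.mem_univ k), Finset.card_univ,
          Fintype.card_fin]
      calc (δ / 3) ^ (m - 1) = ∏ _l ∈ Finset.univ.erase k, (δ / 3) := by
            rw [Finset.prod_const, hcard]
        _ ≤ ∏ l ∈ Finset.univ.erase k, |τ k t - τ l s| := by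
            apply Finset.prod_le_prod
            · intro i _; exact le_of_lt hδ3
            · intro i hi; exact hother i (Finset.ne_of_mem_erase hi)
    have hsplit : ∏ l : Fin m, |τ k t - τ l s|
        = |τ k t - τ k s| * ∏ l ∈ Finset.univ.erase k, |τ k t - τ l s| :=
      (Finset.mul_prod_erase Finset.univ _ (Finset.mem_univ k)).symm
    have habsprod : ∏ l : Fin m, |τ k t - τ l s| ≤ M * μ h := by
      rw [← Finset.abs_prod]; exact hprod
    have hkey : |τ k t - τ k s| * (δ / 3) ^ (m - 1) ≤ M * μ h := by
      calc |τ k t - τ k s| * (δ / 3) ^ (m - 1)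
          ≤ |τ k t - τ k s| * ∏ l ∈ Finset.univ.erase k, |τ k t - τ l s| :=
            mul_le_mul_of_nonneg_left hprodlow (abs_nonneg _)
        _ = ∏ l : Fin m, |τ k t - τ l s| := hsplit.symm
        _ ≤ M * μ h := habsprod
    have hfin : |τ k t - τ k s| ≤ M / (δ / 3) ^ (m - 1) * μ h := by
      rw [div_mul_eq_mul_div, le_div_iff₀ (pow_pos hδ3 _)]
      linarith [hkey]
    calc |τ k t - τ k s| ≤ M / (δ / 3) ^ (m - 1) * μ h := hfin
      _ ≤ C * μ h := mul_le_mul_of_nonneg_right (le_max_left _ _) hμnn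
  · -- big case: use the bound R
    push_neg at hcase
    have h2R : |τ k t - τ k s| ≤ 2 * R := by
      calc |τ k t - τ k s| ≤ |τ k t| + |τ k s| := abs_sub _ _
        _ ≤ 2 * R := by linarith [hbd t ht k, hbd s hs k]
    calc |τ k t - τ k s| ≤ 2 * R := h2R
      _ = (2 * R / ε) * ε := by field_simp
      _ ≤ (2 * R / ε) * μ h := by
          apply mul_le_mul_of_nonneg_left (le_of_lt hcase)
          positivity
      _ ≤ C * μ h := mul_le_mul_of_nonneg_right (le_max_right _ _) hμnn
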